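/- Let s be a string, p ≥ 2, and let U be the set of nonempty suffix-palindromes of s with minimal period exactly p, assumed nonempty with k = |U| elements. Then there exist unique palindromes u, v with |u·v| = p and v nonempty such that either (1) U = {(uv)^{k+1}u, (uv)^k u, ..., (uv)^2 u} and the longest suffix-palindrome of s shorter than every member of U is uvu, or (2) U = {(uv)^k u, ..., uvu} and the longest suffix-palindrome of s shorter than every member of U is u (when u is nonempty). -/

import Mathlib

/-- `p` is a period of `w`: letters at distance `p` agree. -/
def HasPeriod {α : Type*} (w : List α) (p : ℕ) : Prop :=
  ∀ i : ℕ, i + p < w.length → w[i]? = w[i + p]?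

/-- The minimal period of `w`. -/
noncomputable def minPeriod {α : Type*} (w : List α) : ℕ :=
  sInf {p : ℕ | 0 < p ∧ HasPeriod w p}

/-- `k`-th power of a list: `k` concatenated copies of `w`. -/
def listPow {α : Type*} (w : List α) (k : ℕ) : List α := (List.replicate k w).flatten

/-- `s` admits a factorization into exactly `k` nonempty palindromes. -/
def HasPalFact {α : Type*} (s : List α) (k : ℕ) : Prop :=
  ∃ L : List (List α), L.length = k ∧ L.flatten = s ∧ ∀ w ∈ L, w ≠ [] ∧ w.reverse = w

/-- Palindromic length: minimum number of nonempty palindromic factors (`pl ε = 0`). -/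
noncomputable def pl {α : Type*} (s : List α) : ℕ := sInf {k : ℕ | HasPalFact s k}

/-- `plParity j s` : minimum `k ≡ j (mod 2)` with a palindromic `k`-factorization, `⊤` if none. -/
noncomputable def plParity {α : Type*} (j : ℕ) (s : List α) : ℕ∞ :=
  sInf {n : ℕ∞ | ∃ k : ℕ, n = (k : ℕ∞) ∧ k % 2 = j ∧ HasPalFact s k}

/-- The set of nonempty palindromic suffixes of `s` with minimal period exactly `p`
(the `p`-series of `s`). -/
def pSeries {α : Type*} (s : List α) (p : ℕ) : Set (List α) :=
  {w | w <:+ s ∧ w ≠ [] ∧ w.reverse = w ∧ minPeriod w = p}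

/-- `x` is the longest suffix-palindrome of `s` shorter than every member of `U`
(the head of the series following `U`). -/
def IsNextSeriesHead {α : Type*} (s : List α) (U : Set (List α)) (x : List α) : Prop :=
  x <:+ s ∧ x.reverse = x ∧ (∀ w ∈ U, x.length < w.length) ∧
    ∀ y : List α, y <:+ s → y ≠ [] → y.reverse = y →
      (∀ w ∈ U, y.length < w.length) → y.length ≤ x.length

namespace PS
variable {α : Type*}

lemma getElem?_mod {w : List α} {p : ℕ} (h : HasPeriod w p) (hp : 0 < p) :
    ∀ i, i < w.length → w[i]? = w[i % p]? := by
  intro i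
  induction i using Nat.strong_induction_on with
  | _ i ih =>
    intro hi
    rcases lt_or_ge i p with h1 | h1
    · rw [Nat.mod_eq_of_lt h1]
    · have e1 : (i - p) + p = i := by omega
      have h2 := h (i - p) (by omega)
      rw [e1] at h2
      have e2 : (i - p) % p = i % p := (Nat.mod_eq_sub_mod h1).symm
      rw [← h2, ih (i - p) (by omega) (by omega), e2]

lemma period_mod {w : List α} {p : ℕ} (h : HasPeriod w p) (hp : 0 < p)
    {i j : ℕ} (hij : i % p = j % p) (hi : i < w.length) (hj : j < w.length) :
    w[i]? = w[j]? := by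
  rw [getElem?_mod h hp i hi, getElem?_mod h hp j hj, hij]

lemma period_sub {w : List α} {p q : ℕ} (hq : 0 < q) (hqp : q ≤ p)
    (hn : p + q ≤ w.length) (hp' : HasPeriod w p) (hq' : HasPeriod w q) :
    HasPeriod w (p - q) := by
  intro i hi
  rcases lt_or_ge (i + p) w.length with h1 | h1
  · have e : i + (p - q) + q = i + p := by omega
    have h2 := hq' (i + (p - q)) (by omega)
    rw [e] at h2
    rw [hp' i h1, ← h2]
  · have hiq : q ≤ i := by omega
    have h2 := hq' (i - q) (by omega)
    have e2 : i - q + q = i := by omega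
    rw [e2] at h2
    have h3 := hp' (i - q) (by omega)
    have e3 : i - q + p = i + (p - q) := by omega
    rw [e3] at h3
    rw [← h2, h3]

lemma fine_wilf {w : List α} : ∀ N p q, p + q ≤ N → 0 < p → 0 < q → HasPeriod w p →
    HasPeriod w q → p + q ≤ w.length → HasPeriod w (Nat.gcd p q) := by
  intro N
  induction N with
  | zero => intro p q h hp; omega
  | succ N ih =>
    intro p q hN hp hq hwp hwq hlen
    rcases Nat.lt_trichotomy p q with h1 | h1 | h1
    · have h2 := period_sub hp (le_of_lt h1) (by omega) hwq hwp
      have h3 := ih p (q - p) (by omega) hp (by omega) hwp h2 (by omega)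
      rwa [Nat.gcd_sub_self_right (le_of_lt h1)] at h3
    · subst h1; rwa [Nat.gcd_self]
    · have h2 := period_sub hq (le_of_lt h1) (by omega) hwp hwq
      have h3 := ih (p - q) q (by omega) (by omega) hq h2 hwq (by omega)
      rwa [Nat.gcd_sub_self_left (le_of_lt h1)] at h3

lemma hasPeriod_length (w : List α) : HasPeriod w w.length := by
  intro i hi; omega

lemma minPeriod_pos (w : List α) : 0 < minPeriod w ∧ HasPeriod w (minPeriod w) := by
  have : minPeriod w ∈ {p : ℕ | 0 < p ∧ HasPeriod w p} := by
    apply Nat.sInf_mem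
    exact ⟨w.length + 1, by omega, fun i hi => absurd hi (by omega)⟩
  exact this

lemma minPeriod_le {w : List α} {p : ℕ} (hp : 0 < p) (h : HasPeriod w p) :
    minPeriod w ≤ p := Nat.sInf_le ⟨hp, h⟩

lemma minPeriod_le_length {w : List α} (hw : w ≠ []) : minPeriod w ≤ w.length :=
  minPeriod_le (List.length_pos_iff.mpr hw) (hasPeriod_length w)

lemma HasPeriod.of_suffix {w w' : List α} {p : ℕ} (h : HasPeriod w p) (hs : w' <:+ w) :
    HasPeriod w' p := by
  rw [List.suffix_iff_eq_drop] at hs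
  have hl : w'.length ≤ w.length := hs ▸ (by simp)
  intro i hi
  rw [hs, List.getElem?_drop, List.getElem?_drop]
  have := h (w.length - w'.length + i) (by omega)
  rw [show w.length - w'.length + (i + p) = w.length - w'.length + i + p by omega]
  exact this




lemma listPow_zero (w : List α) : listPow w 0 = [] := rfl

lemma listPow_succ (w : List α) (k : ℕ) : listPow w (k + 1) = w ++ listPow w k := by
  rw [listPow, List.replicate_succ, List.flatten_cons]; rfl

lemma listPow_one (w : List α) : listPow w 1 = w := by
  rw [listPow_succ, listPow_zero, List.append_nil]

lemma listPow_add (w : List α) (a b : ℕ) : listPow w (a + b) = listPow w a ++ listPow w b := by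
  show (List.replicate (a+b) w).flatten = _
  rw [List.replicate_add, List.flatten_append]; rfl

lemma listPow_length (w : List α) (k : ℕ) : (listPow w k).length = k * w.length := by
  induction k with
  | zero => simp [listPow_zero]
  | succ k ih => rw [listPow_succ]; simp [ih]; ring

lemma listPow_getElem? (w : List α) (k i : ℕ) (hi : i < k * w.length) :
    (listPow w k)[i]? = w[i % w.length]? := by
  induction k generalizing i with
  | zero => exact absurd hi (by simp)
  | succ k ih =>
    rw [Nat.succ_mul] at hi
    rw [listPow_succ]
    rcases lt_or_ge i w.length with h1 | h1
    · rw [List.getElem?_append, if_pos h1, Nat.mod_eq_of_lt h1]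
    · rw [List.getElem?_append_right h1, ih (i - w.length) (by omega)]
      congr 1
      exact (Nat.mod_eq_sub_mod h1).symm

lemma listPow_comm (w : List α) (k : ℕ) : listPow w k ++ w = w ++ listPow w k := by
  induction k with
  | zero => simp [listPow_zero]
  | succ k ih => rw [listPow_succ, List.append_assoc, ih, ← List.append_assoc]

lemma listPow_reverse (w : List α) (k : ℕ) : (listPow w k).reverse = listPow w.reverse k := by
  induction k with
  | zero => rfl
  | succ k ih =>
    rw [listPow_succ, List.reverse_append, ih, listPow_succ, ← listPow_comm]

lemma shuffle (u v : List α) (k : ℕ) :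
    u ++ listPow (v ++ u) k = listPow (u ++ v) k ++ u := by
  induction k with
  | zero => simp [listPow_zero]
  | succ k ih =>
    rw [listPow_succ, listPow_succ, ← List.append_assoc u (v ++ u), ← List.append_assoc u v u,
      List.append_assoc (u ++ v) u, ih, ← List.append_assoc]

lemma pow_palindrome {u v : List α} (hu : u.reverse = u) (hv : v.reverse = v) (m : ℕ) :
    (listPow (u ++ v) m ++ u).reverse = listPow (u ++ v) m ++ u := by
  rw [List.reverse_append, hu, listPow_reverse, List.reverse_append, hu, hv, shuffle]

lemma powu_getElem? (x : List α) (m r i : ℕ) (hr : r ≤ x.length)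
    (hi : i < m * x.length + r) :
    (listPow x m ++ x.take r)[i]? = x[i % x.length]? := by
  rcases lt_or_ge i (m * x.length) with h1 | h1
  · rw [List.getElem?_append, listPow_length, if_pos h1, listPow_getElem? x m i h1]
  · rw [List.getElem?_append_right (by rw [listPow_length]; exact h1), listPow_length,
      List.getElem?_take, if_pos (by omega)]
    congr 1
    have e : i = m * x.length + (i - m * x.length) := by omega
    conv_rhs => rw [e, Nat.mul_comm m x.length]
    rw [Nat.mul_add_mod, Nat.mod_eq_of_lt (show i - x.length * m < x.length by
      rw [Nat.mul_comm]; omega), Nat.mul_comm x.length m]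

lemma powu_length (x : List α) (m r : ℕ) (hr : r ≤ x.length) :
    (listPow x m ++ x.take r).length = m * x.length + r := by
  simp [listPow_length, Nat.min_eq_left hr]



lemma eq_of_getElem? {l l' : List α} (hlen : l.length = l'.length)
    (h : ∀ i < l.length, l[i]? = l'[i]?) : l = l' := by
  apply List.ext_getElem?
  intro i
  rcases lt_or_ge i l.length with h1 | h1
  · exact h i h1
  · rw [List.getElem?_eq_none h1, List.getElem?_eq_none (by omega)]

lemma pal_getElem? {w : List α} (hw : w.reverse = w) {i : ℕ} (hi : i < w.length) :
    w[i]? = w[w.length - 1 - i]? := by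
  conv_lhs => rw [← hw]
  exact List.getElem?_reverse hi

/-- a palindromic suffix of a palindrome is a prefix -/
lemma pal_suffix_prefix {w y : List α} (hw : w.reverse = w) (hy : y.reverse = y)
    (hs : y <:+ w) : y = w.take y.length := by
  rw [List.suffix_iff_eq_drop] at hs
  have hl : y.length ≤ w.length := by
    conv_lhs => rw [hs]
    simp
  conv_lhs => rw [← hy, hs, List.reverse_drop, hw]
  congr 1
  omega

/-- a border (prefix & suffix) gives a period -/
lemma border_period {w y : List α} (hpre : y = w.take y.length) (hsuf : y <:+ w) :
    HasPeriod w (w.length - y.length) := by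
  rw [List.suffix_iff_eq_drop] at hsuf
  have hl : y.length ≤ w.length := by
    have := congrArg List.length hpre
    simp at this
    omega
  intro i hi
  have hil : i < y.length := by omega
  have l1 : w[i]? = y[i]? := by
    rw [hpre, List.getElem?_take, if_pos hil]
  have l2 : y[i]? = w[i + (w.length - y.length)]? := by
    conv_lhs => rw [hsuf]
    rw [List.getElem?_drop]
    congr 1
    omega
  rw [l1, l2]

/-- key bound: proper palindromic suffix of palindrome w is short -/
lemma pal_suffix_short {w y : List α} (hw : w.reverse = w) (hy : y.reverse = y)
    (hs : y <:+ w) (hlt : y.length < w.length) : y.length + minPeriod w ≤ w.length := by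
  have hpre := pal_suffix_prefix hw hy hs
  have hper := border_period hpre hs
  have := minPeriod_le (p := w.length - y.length) (by omega) hper
  omega

lemma suffix_of_suffix_le {l1 l2 s : List α} (h1 : l1 <:+ s) (h2 : l2 <:+ s)
    (h : l1.length ≤ l2.length) : l1 <:+ l2 := by
  rw [List.suffix_iff_eq_drop] at h1 h2 ⊢
  have e2 : l2.length ≤ s.length := by
    conv_lhs => rw [h2]; 
    simp
  rw [h1, h2]
  rw [List.drop_drop]
  congr 1
  simp
  omega

lemma suffix_eq_of_length {l1 l2 s : List α} (h1 : l1 <:+ s) (h2 : l2 <:+ s)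
    (h : l1.length = l2.length) : l1 = l2 := by
  rw [List.suffix_iff_eq_drop] at h1 h2
  rw [h1, h2, h]

section Decomp
variable {W : List α} {p : ℕ}

lemma period_take (hper : HasPeriod W p) (hp : 0 < p)
    {i : ℕ} (hi : i < W.length) : W[i]? = (W.take p)[i % p]? := by
  rw [getElem?_mod hper hp i hi, List.getElem?_take, if_pos (Nat.mod_lt i hp)]

lemma decomp (hper : HasPeriod W p) (hp : 0 < p) (hpn : p ≤ W.length) :
    W = listPow (W.take p) (W.length / p) ++ (W.take p).take (W.length % p) := by
  have hx : (W.take p).length = p := by simp [hpn]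
  have hr : W.length % p ≤ (W.take p).length := by
    rw [hx]; exact le_of_lt (Nat.mod_lt _ hp)
  apply eq_of_getElem?
  · rw [powu_length _ _ _ hr, hx]
    exact (Nat.div_add_mod' W.length p).symm
  · intro i hi
    rw [powu_getElem? _ _ _ _ hr (by rw [hx]; have := Nat.div_add_mod' W.length p; omega),
      hx, ← period_take hper hp hi]

lemma take_mod_palindrome (hpal : W.reverse = W) (hper : HasPeriod W p) (hp : 0 < p) :
    (W.take (W.length % p)).reverse = W.take (W.length % p) := by
  have hrn : W.length % p ≤ W.length := Nat.mod_le _ _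
  have hrp : W.length % p < p := Nat.mod_lt _ hp
  have hlt : (W.take (W.length % p)).length = W.length % p := by
    rw [List.length_take, Nat.min_eq_left hrn]
  apply eq_of_getElem?
  · simp
  · intro i hi
    rw [List.length_reverse, hlt] at hi
    rw [List.getElem?_reverse (by rw [hlt]; exact hi), hlt,
      List.getElem?_take, if_pos (by omega), List.getElem?_take, if_pos hi]
    have e : W.length - 1 - i = (W.length % p - 1 - i) + p * (W.length / p) := by
      have := Nat.div_add_mod W.length p
      omega
    have hmod : (W.length - 1 - i) % p = (W.length % p - 1 - i) % p := by
      rw [e, Nat.add_mul_mod_self_left]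
    exact (period_mod hper hp hmod (by omega) (by omega)).symm.trans
      (pal_getElem? hpal (by omega)).symm

lemma mid_palindrome (hpal : W.reverse = W) (hper : HasPeriod W p) (hp : 0 < p)
    (hpn : p ≤ W.length) :
    ((W.take p).drop (W.length % p)).reverse = (W.take p).drop (W.length % p) := by
  obtain ⟨r, hrdef⟩ : ∃ r, r = W.length % p := ⟨_, rfl⟩
  obtain ⟨M, hMdef⟩ : ∃ M, M = W.length / p := ⟨_, rfl⟩
  rw [← hrdef]
  have hrp : r < p := hrdef ▸ Nat.mod_lt _ hp
  have hnMr : W.length = p * M + r := by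
    rw [hMdef, hrdef]; exact (Nat.div_add_mod _ _).symm
  have hxl : (W.take p).length = p := by simp [hpn]
  have hlt : ((W.take p).drop r).length = p - r := by
    rw [List.length_drop, hxl]
  have hM1 : 1 ≤ M := by
    rw [hMdef]; exact (Nat.one_le_div_iff hp).mpr hpn
  have e2 : p * M = p * (M - 1) + p := by
    have h3 : M - 1 + 1 = M := Nat.sub_add_cancel hM1
    calc p * M = p * (M - 1 + 1) := by rw [h3]
      _ = p * (M - 1) + p := by ring
  apply eq_of_getElem?
  · simp
  · intro j hj
    rw [List.length_reverse, hlt] at hj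
    have hval : ∀ i, i < p - r → ((W.take p).drop r)[i]? = W[r + i]? := by
      intro i hip
      rw [List.getElem?_drop, List.getElem?_take, if_pos (by omega)]
    rw [List.getElem?_reverse (by rw [hlt]; exact hj), hlt, hval _ (by omega),
      hval _ (by omega)]
    have hmod : (W.length - 1 - (r + j)) % p = (r + (p - r - 1 - j)) % p := by
      have e : W.length - 1 - (r + j) = (r + (p - r - 1 - j)) + p * (M - 1) := by omega
      rw [e, Nat.add_mul_mod_self_left]
    have h5 := pal_getElem? hpal (i := r + j) (by omega)
    rw [h5]
    exact period_mod hper hp hmod.symm (by omega) (by omega)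

lemma powu_period (x : List α) (m r : ℕ) (hr : r ≤ x.length) (hx : 0 < x.length) :
    HasPeriod (listPow x m ++ x.take r) x.length := by
  intro i hi
  rw [powu_length _ _ _ hr] at hi
  rw [powu_getElem? _ _ _ _ hr (by omega), powu_getElem? _ _ _ _ hr (by omega),
    Nat.add_mod_right]

lemma powu_suffix (x : List α) {m m' : ℕ} (r : ℕ) (h : m ≤ m') :
    listPow x m ++ x.take r <:+ listPow x m' ++ x.take r := by
  refine ⟨listPow x (m' - m), ?_⟩
  rw [← List.append_assoc, ← listPow_add]
  congr 2
  omega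

lemma period_extend (hper : HasPeriod W p) (hp : 0 < p) {g : ℕ} (hg : 0 < g)
    (hshift : ∀ a, a < p → (W.take p)[a]? = (W.take p)[(a + g) % p]?) : HasPeriod W g := by
  intro j hj
  rw [period_take hper hp (by omega), period_take hper hp hj,
    hshift (j % p) (Nat.mod_lt _ hp)]
  congr 1
  rw [Nat.mod_add_mod]

lemma powu_shift {x : List α} {m r g : ℕ} (hr : r ≤ x.length) (hx : 0 < x.length)
    (hm : 2 ≤ m) (hg : 0 < g) (hgp : g ≤ x.length)
    (hper : HasPeriod (listPow x m ++ x.take r) g) :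
    ∀ a, a < x.length → x[a]? = x[(a + g) % x.length]? := by
  intro a ha
  have h2L : 2 * x.length ≤ m * x.length := Nat.mul_le_mul_right x.length hm
  have h1 := hper a (by rw [powu_length _ _ _ hr]; omega)
  rw [powu_getElem? _ _ _ _ hr (by omega), powu_getElem? _ _ _ _ hr (by omega),
    Nat.mod_eq_of_lt ha] at h1
  exact h1

lemma powu_minPeriod_eq {m : ℕ} (hmin : minPeriod W = p) (hp : 0 < p) (hpn : p ≤ W.length)
    (hm : 2 ≤ m) :
    minPeriod (listPow (W.take p) m ++ (W.take p).take (W.length % p)) = p := by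
  have hx : (W.take p).length = p := by simp [hpn]
  have hr : W.length % p ≤ (W.take p).length := by
    rw [hx]; exact le_of_lt (Nat.mod_lt _ hp)
  have hperW : HasPeriod W p := hmin ▸ (minPeriod_pos W).2
  have hperw : HasPeriod (listPow (W.take p) m ++ (W.take p).take (W.length % p)) p := by
    have h0 := powu_period (W.take p) m (W.length % p) hr (by rw [hx]; omega)
    rwa [hx] at h0
  have hle : minPeriod (listPow (W.take p) m ++ (W.take p).take (W.length % p)) ≤ p :=
    minPeriod_le hp hperw
  rcases eq_or_lt_of_le hle with h | h
  · exact h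
  · exfalso
    set w := listPow (W.take p) m ++ (W.take p).take (W.length % p) with hw
    set q := minPeriod w with hq
    have hq0 : 0 < q := (minPeriod_pos w).1
    have hqper : HasPeriod w q := (minPeriod_pos w).2
    have hlenw : w.length = m * p + W.length % p := by
      rw [hw, powu_length _ _ _ hr, hx]
    have h2L : 2 * p ≤ m * p := Nat.mul_le_mul_right p hm
    have hFW := fine_wilf (w := w) (p + q) p q le_rfl hp hq0 hperw hqper (by omega)
    have hg0 : 0 < Nat.gcd p q := Nat.gcd_pos_of_pos_left _ hp
    have hgq : Nat.gcd p q ≤ q := Nat.le_of_dvd hq0 (Nat.gcd_dvd_right _ _)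
    have hshift := powu_shift (g := Nat.gcd p q) hr (by omega) hm hg0 (by omega) hFW
    rw [hx] at hshift
    have hWg : HasPeriod W (Nat.gcd p q) := period_extend hperW hp hg0 hshift
    have := minPeriod_le hg0 hWg
    omega

lemma suffix_pal_classify {w' : List α} (hmin : minPeriod W = p) (hp : 0 < p)
    (hpalW : W.reverse = W) (hpalw : w'.reverse = w') (hs : w' <:+ W)
    (hpw : p ≤ w'.length) :
    ∃ a, 1 ≤ a ∧ a ≤ W.length / p ∧
      w' = listPow (W.take p) a ++ (W.take p).take (W.length % p) := by
  have hperW : HasPeriod W p := hmin ▸ (minPeriod_pos W).2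
  have hl : w'.length ≤ W.length := hs.length_le
  have hpn : p ≤ W.length := le_trans hpw hl
  have hx : (W.take p).length = p := by simp [hpn]
  have hr : W.length % p ≤ (W.take p).length := by
    rw [hx]; exact le_of_lt (Nat.mod_lt _ hp)
  have hd : (W.length - w'.length) % p = 0 := by
    by_contra hd0
    have hd1 : 0 < (W.length - w'.length) % p := Nat.pos_of_ne_zero hd0
    have hd2 : (W.length - w'.length) % p < p := Nat.mod_lt _ hp
    have hpre := pal_suffix_prefix hpalW hpalw hs
    have hdrop : w' = W.drop (W.length - w'.length) := List.suffix_iff_eq_drop.mp hs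
    have hshift : ∀ a, a < p →
        (W.take p)[a]? = (W.take p)[(a + (W.length - w'.length) % p) % p]? := by
      intro a ha
      have haℓ : a < w'.length := lt_of_lt_of_le ha hpw
      have h1 : w'[a]? = W[a]? := by
        conv_lhs => rw [hpre]
        rw [List.getElem?_take, if_pos haℓ]
      have h2 : w'[a]? = W[(W.length - w'.length) + a]? := by
        conv_lhs => rw [hdrop]
        rw [List.getElem?_drop]
      have h3 : W[a]? = (W.take p)[a % p]? := period_take hperW hp (by omega)
      have h4 : W[(W.length - w'.length) + a]?
          = (W.take p)[((W.length - w'.length) + a) % p]? :=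
        period_take hperW hp (by omega)
      have h5 : ((W.length - w'.length) + a) % p = (a + (W.length - w'.length) % p) % p := by
        rw [Nat.add_comm a ((W.length - w'.length) % p), Nat.mod_add_mod]
      have h6 : (W.take p)[a]? = (W.take p)[a % p]? := by rw [Nat.mod_eq_of_lt ha]
      rw [h6, ← h3, ← h1, h2, h4, h5]
    have hWd : HasPeriod W ((W.length - w'.length) % p) := period_extend hperW hp hd1 hshift
    have := minPeriod_le hd1 hWd
    omega
  have h2 : W.length = w'.length + p * ((W.length - w'.length) / p) := by
    have := Nat.div_add_mod (W.length - w'.length) p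
    omega
  have hrl : W.length % p = w'.length % p := by
    conv_lhs => rw [h2]
    rw [Nat.add_mul_mod_self_left]
  refine ⟨w'.length / p, (Nat.one_le_div_iff hp).mpr hpw, Nat.div_le_div_right hl, ?_⟩
  have hlen2 : (listPow (W.take p) (w'.length / p) ++ (W.take p).take (W.length % p)).length
      = w'.length := by
    rw [powu_length _ _ _ hr, hx, hrl]
    exact Nat.div_add_mod' w'.length p
  apply suffix_eq_of_length hs ?_ (by rw [hlen2])
  have hsub := powu_suffix (W.take p) (W.length % p) (Nat.div_le_div_right (c := p) hl)
  rw [← decomp hperW hp hpn] at hsub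
  exact hsub

end Decomp

end PS
open PS

/-- structure of a `p`-series with `p ≥ 2`: there are unique palindromes
`u`, `v` with `|uv| = p`, `v ≠ ε` such that either the series is
`{(uv)^{k+1}u, ..., (uv)^2 u}` and the next series begins with `uvu`, or the series is
`{(uv)^k u, ..., uvu}` and the next series begins with `u` (when `u` is nonempty). -/
theorem p_series_structure {α : Type*} (s : List α) (p k : ℕ) (hp : 2 ≤ p)
    (hU : (pSeries s p).Nonempty) (hk : k = (pSeries s p).ncard) :
    ∃! uv : List α × List α,
      uv.1.reverse = uv.1 ∧ uv.2.reverse = uv.2 ∧ uv.2 ≠ [] ∧ (uv.1 ++ uv.2).length = p ∧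
      ((pSeries s p = {w | ∃ m : ℕ, 2 ≤ m ∧ m ≤ k + 1 ∧ w = listPow (uv.1 ++ uv.2) m ++ uv.1} ∧
          IsNextSeriesHead s (pSeries s p) (uv.1 ++ uv.2 ++ uv.1)) ∨
       (pSeries s p = {w | ∃ m : ℕ, 1 ≤ m ∧ m ≤ k ∧ w = listPow (uv.1 ++ uv.2) m ++ uv.1} ∧
          (uv.1 ≠ [] → IsNextSeriesHead s (pSeries s p) uv.1))) := by
  classical
  have hp0 : 0 < p := by omega
  have hfin : (pSeries s p).Finite := by
    apply Set.Finite.subset (List.tails s).toFinset.finite_toSet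
    intro w hw
    simp only [List.coe_toFinset, Set.mem_setOf_eq, List.mem_tails]
    exact hw.1
  obtain ⟨W, hWmem0, hWmax0⟩ := hfin.exists_maximalFor List.length _ hU
  have hWmax : ∀ w' ∈ pSeries s p, w'.length ≤ W.length := by
    intro w' hw'
    by_contra h
    push_neg at h
    have := hWmax0 hw' (le_of_lt h)
    omega
  obtain ⟨hWs, hWne, hWpal, hWmin⟩ := hWmem0
  have hWmem : W ∈ pSeries s p := ⟨hWs, hWne, hWpal, hWmin⟩
  have hperW : HasPeriod W p := hWmin ▸ (minPeriod_pos W).2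
  have hpn : p ≤ W.length := hWmin ▸ minPeriod_le_length hWne
  obtain ⟨x, hxdef⟩ : ∃ x, x = W.take p := ⟨_, rfl⟩
  obtain ⟨r, hrdef⟩ : ∃ r, r = W.length % p := ⟨_, rfl⟩
  obtain ⟨M, hMdef⟩ : ∃ M, M = W.length / p := ⟨_, rfl⟩
  obtain ⟨u, hudef⟩ : ∃ u, u = x.take r := ⟨_, rfl⟩
  obtain ⟨v, hvdef⟩ : ∃ v, v = x.drop r := ⟨_, rfl⟩
  have hx : x.length = p := by rw [hxdef]; simp [hpn]
  have hrp : r < p := hrdef ▸ Nat.mod_lt _ hp0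
  have hrx : r ≤ x.length := by omega
  have hnMr : W.length = M * p + r := by
    rw [hMdef, hrdef]; exact (Nat.div_add_mod' _ _).symm
  have hM1 : 1 ≤ M := by rw [hMdef]; exact (Nat.one_le_div_iff hp0).mpr hpn
  have huv : u ++ v = x := by rw [hudef, hvdef]; exact List.take_append_drop r x
  have hul : u.length = r := by
    rw [hudef, List.length_take, hx, Nat.min_eq_left (le_of_lt hrp)]
  have hvl : v.length = p - r := by rw [hvdef, List.length_drop, hx]
  have hvne : v ≠ [] := by
    intro h
    rw [h] at hvl
    simp at hvl
    omega
  have hu_eq : u = W.take (W.length % p) := by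
    rw [hudef, hxdef, List.take_take, inf_eq_left.mpr (le_of_lt hrp), hrdef]
  have hu_pal : u.reverse = u := by rw [hu_eq]; exact take_mod_palindrome hWpal hperW hp0
  have hv_pal : v.reverse = v := by
    rw [hvdef, hxdef, hrdef]
    exact mid_palindrome hWpal hperW hp0 hpn
  have hWdec : W = listPow x M ++ u := by
    rw [hudef, hxdef, hMdef, hrdef]
    exact decomp hperW hp0 hpn
  have hlen_m : ∀ m, (listPow x m ++ u).length = m * p + r := by
    intro m
    rw [hudef, powu_length x m r hrx, hx]
  have hper_m : ∀ m, HasPeriod (listPow x m ++ u) p := by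
    intro m
    have h0 := powu_period x m r hrx (by omega)
    rwa [hx, ← hudef] at h0
  have hmin_m : ∀ m, 2 ≤ m → minPeriod (listPow x m ++ u) = p := by
    intro m hm
    have h0 := powu_minPeriod_eq (W := W) (p := p) hWmin hp0 hpn hm
    rwa [← hxdef, ← hrdef, ← hudef] at h0
  have hsuf_m : ∀ {m m' : ℕ}, m ≤ m' → listPow x m ++ u <:+ listPow x m' ++ u := by
    intro m m' h
    have h0 := powu_suffix x (r := r) h
    rwa [← hudef] at h0
  have hsufW : ∀ m ≤ M, listPow x m ++ u <:+ W := by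
    intro m hm
    rw [hWdec]
    exact hsuf_m hm
  have hsufs : ∀ m ≤ M, listPow x m ++ u <:+ s := fun m hm => (hsufW m hm).trans hWs
  have hpal_m : ∀ m, (listPow x m ++ u).reverse = listPow x m ++ u := by
    intro m
    rw [← huv]
    exact pow_palindrome hu_pal hv_pal m
  have hple : ∀ m : ℕ, 1 ≤ m → p ≤ m * p := by
    intro m hm
    have := Nat.mul_le_mul_right p hm
    omega
  have hne_m : ∀ m, 1 ≤ m → listPow x m ++ u ≠ [] := by
    intro m hm h
    have h1 := hlen_m m
    rw [h] at h1
    simp at h1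
    have := hple m hm
    omega
  have hmem_m : ∀ m, 1 ≤ m → m ≤ M → minPeriod (listPow x m ++ u) = p →
      listPow x m ++ u ∈ pSeries s p := by
    intro m h1 h2 h3
    exact ⟨hsufs m h2, hne_m m h1, hpal_m m, h3⟩
  have hclass : ∀ w' ∈ pSeries s p, ∃ a, 1 ≤ a ∧ a ≤ M ∧ w' = listPow x a ++ u := by
    intro w' hw'
    obtain ⟨hw's, hw'ne, hw'pal, hw'min⟩ := hw'
    have hw'W : w' <:+ W :=
      suffix_of_suffix_le hw's hWs (hWmax w' ⟨hw's, hw'ne, hw'pal, hw'min⟩)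
    have hpw : p ≤ w'.length := hw'min ▸ minPeriod_le_length hw'ne
    obtain ⟨a, ha1, ha2, ha3⟩ := suffix_pal_classify hWmin hp0 hWpal hw'pal hw'W hpw
    refine ⟨a, ha1, hMdef ▸ ha2, ?_⟩
    rw [ha3, ← hxdef, ← hrdef, ← hudef]
  have hinj : ∀ a b : ℕ, listPow x a ++ u = listPow x b ++ u → a = b := by
    intro a b h
    have h1 := congrArg List.length h
    rw [hlen_m, hlen_m] at h1
    exact Nat.eq_of_mul_eq_mul_right hp0 (by omega)
  -- uniqueness, shared by both cases
  have huniq : ∀ q : List α × List α,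
      (q.1.reverse = q.1 ∧ q.2.reverse = q.2 ∧ q.2 ≠ [] ∧ (q.1 ++ q.2).length = p ∧
      ((pSeries s p = {w | ∃ m : ℕ, 2 ≤ m ∧ m ≤ k + 1 ∧ w = listPow (q.1 ++ q.2) m ++ q.1} ∧
          IsNextSeriesHead s (pSeries s p) (q.1 ++ q.2 ++ q.1)) ∨
       (pSeries s p = {w | ∃ m : ℕ, 1 ≤ m ∧ m ≤ k ∧ w = listPow (q.1 ++ q.2) m ++ q.1} ∧
          (q.1 ≠ [] → IsNextSeriesHead s (pSeries s p) q.1)))) → q = (u, v) := by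
    rintro ⟨u', v'⟩ ⟨hpu', hpv', hv'ne, hlen', hcase⟩
    dsimp only at hpu' hpv' hv'ne hlen' hcase
    have hWpow' : ∃ m', 1 ≤ m' ∧ W = listPow (u' ++ v') m' ++ u' := by
      rcases hcase with ⟨hset, -⟩ | ⟨hset, -⟩
      · have h0 := hWmem
        rw [hset] at h0
        obtain ⟨m, hm2, -, hWe⟩ := h0
        exact ⟨m, by omega, hWe⟩
      · have h0 := hWmem
        rw [hset] at h0
        obtain ⟨m, hm1, -, hWe⟩ := h0
        exact ⟨m, hm1, hWe⟩
    obtain ⟨m', hm'1, hW'⟩ := hWpow'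
    have hlenuv : u'.length + v'.length = p := by
      rw [← List.length_append]
      exact hlen'
    have hv'pos : 0 < v'.length := List.length_pos_iff.mpr hv'ne
    have hr' : u'.length < p := by omega
    have hWlen' : W.length = m' * p + u'.length := by
      rw [hW', List.length_append, listPow_length, hlen']
    have hru' : u'.length = r := by
      have h1 : W.length % p = u'.length % p := by
        conv_lhs => rw [hWlen', Nat.mul_comm m' p]
        rw [Nat.mul_add_mod]
      rw [Nat.mod_eq_of_lt hr'] at h1
      omega
    have hMp : (listPow x M).length = M * p := by rw [listPow_length, hx]
    have hdrop1 : W.drop (M * p) = u := by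
      conv_lhs => rw [hWdec, ← hMp]
      exact List.drop_left
    have hy'len : (listPow (u' ++ v') m').length = m' * p := by
      rw [listPow_length, hlen']
    have hdrop2 : W.drop (m' * p) = u' := by
      conv_lhs => rw [hW', ← hy'len]
      exact List.drop_left
    have hmm' : m' * p = M * p := by omega
    have huu' : u' = u := by rw [← hdrop2, hmm', hdrop1]
    have hm'split : m' = 1 + (m' - 1) := by omega
    have htake1 : W.take p = u' ++ v' := by
      conv_lhs => rw [hW', hm'split, listPow_add, listPow_one, List.append_assoc, ← hlen']
      exact List.take_left
    have hxy : x = u' ++ v' := by rw [hxdef, htake1]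
    have hvv' : v' = v := by
      have h0 : u ++ v = u ++ v' := by rw [huv, hxy, huu']
      exact (List.append_cancel_left h0).symm
    rw [Prod.mk.injEq]
    exact ⟨huu', hvv'⟩
  by_cases hc : minPeriod (listPow x 1 ++ u) = p
  · -- CASE 2 : series is (uv)^m u for 1 ≤ m ≤ k, next head u
    have hE : pSeries s p = (fun m => listPow x m ++ u) '' Set.Icc 1 M := by
      ext w'
      constructor
      · intro hw'
        obtain ⟨a, h1, h2, h3⟩ := hclass w' hw'
        exact ⟨a, ⟨h1, h2⟩, h3.symm⟩
      · rintro ⟨m, ⟨h1, h2⟩, rfl⟩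
        refine hmem_m m h1 h2 ?_
        rcases eq_or_lt_of_le h1 with h | h
        · rw [← h]
          exact hc
        · exact hmin_m m (by omega)
    have hkM : k = M := by
      rw [hk, hE, Set.ncard_image_of_injOn (fun a _ b _ h => hinj a b h), ← Finset.coe_Icc,
        Set.ncard_coe_finset, Nat.card_Icc]
      omega
    have hw1mem : listPow x 1 ++ u ∈ pSeries s p := hmem_m 1 le_rfl hM1 hc
    refine ⟨(u, v), ⟨hu_pal, hv_pal, hvne, by rw [huv, hx], Or.inr ⟨?_, ?_⟩⟩, huniq⟩
    · show pSeries s p = {w | ∃ m : ℕ, 1 ≤ m ∧ m ≤ k ∧ w = listPow (u ++ v) m ++ u}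
      rw [hkM, hE]
      ext w'
      simp only [Set.mem_image, Set.mem_Icc, Set.mem_setOf_eq, huv]
      constructor
      · rintro ⟨m, ⟨h1, h2⟩, h3⟩
        exact ⟨m, h1, h2, h3.symm⟩
      · rintro ⟨m, h1, h2, h3⟩
        exact ⟨m, ⟨h1, h2⟩, h3.symm⟩
    · show u ≠ [] → IsNextSeriesHead s (pSeries s p) u
      intro hune
      refine ⟨?_, hu_pal, ?_, ?_⟩
      · exact List.IsSuffix.trans ⟨listPow x 1, rfl⟩ (hsufs 1 hM1)
      · intro w hw
        obtain ⟨a, h1, h2, h3⟩ := hclass w hw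
        rw [h3, hlen_m, hul]
        have := hple a h1
        omega
      · intro y hys hyne hypal hyshort
        have hylt : y.length < (listPow x 1 ++ u).length := hyshort _ hw1mem
        have hysuf : y <:+ listPow x 1 ++ u :=
          suffix_of_suffix_le hys (hsufs 1 hM1) (le_of_lt hylt)
        have h5 := pal_suffix_short (hpal_m 1) hypal hysuf hylt
        rw [hc, hlen_m] at h5
        rw [hul]
        omega
  · -- CASE 1 : series is (uv)^m u for 2 ≤ m ≤ k+1, next head uvu
    have hM2 : 2 ≤ M := by
      rcases eq_or_lt_of_le hM1 with h | h
      · exfalso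
        apply hc
        have h1 : W = listPow x 1 ++ u := by rw [h]; exact hWdec
        rw [← h1]
        exact hWmin
      · omega
    have hE : pSeries s p = (fun m => listPow x m ++ u) '' Set.Icc 2 M := by
      ext w'
      constructor
      · intro hw'
        obtain ⟨a, h1, h2, h3⟩ := hclass w' hw'
        have hminw' : minPeriod w' = p := hw'.2.2.2
        have ha2 : 2 ≤ a := by
          rcases eq_or_lt_of_le h1 with h | h
          · exfalso
            apply hc
            rw [← h] at h3
            rw [← h3]
            exact hminw'
          · omega
        exact ⟨a, ⟨ha2, h2⟩, h3.symm⟩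
      · rintro ⟨m, ⟨h1, h2⟩, rfl⟩
        exact hmem_m m (by omega) h2 (hmin_m m h1)
    have hkM : k + 1 = M := by
      have h1 : k = M - 1 := by
        rw [hk, hE, Set.ncard_image_of_injOn (fun a _ b _ h => hinj a b h), ← Finset.coe_Icc,
          Set.ncard_coe_finset, Nat.card_Icc]
        omega
      omega
    have hw1eq : u ++ v ++ u = listPow x 1 ++ u := by rw [listPow_one, huv]
    have hlen3 : (u ++ v ++ u).length = p + r := by
      rw [List.length_append, List.length_append, hul, hvl]
      omega
    have hw2mem : listPow x 2 ++ u ∈ pSeries s p := hmem_m 2 (by omega) hM2 (hmin_m 2 le_rfl)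
    refine ⟨(u, v), ⟨hu_pal, hv_pal, hvne, by rw [huv, hx], Or.inl ⟨?_, ?_⟩⟩, huniq⟩
    · show pSeries s p = {w | ∃ m : ℕ, 2 ≤ m ∧ m ≤ k + 1 ∧ w = listPow (u ++ v) m ++ u}
      rw [hkM, hE]
      ext w'
      simp only [Set.mem_image, Set.mem_Icc, Set.mem_setOf_eq, huv]
      constructor
      · rintro ⟨m, ⟨h1, h2⟩, h3⟩
        exact ⟨m, h1, h2, h3.symm⟩
      · rintro ⟨m, h1, h2, h3⟩
        exact ⟨m, ⟨h1, h2⟩, h3.symm⟩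
    · show IsNextSeriesHead s (pSeries s p) (u ++ v ++ u)
      refine ⟨?_, ?_, ?_, ?_⟩
      · rw [hw1eq]
        exact hsufs 1 hM1
      · rw [hw1eq]
        exact hpal_m 1
      · intro w hw
        obtain ⟨a, h1, h2, h3⟩ := hclass w hw
        have ha2 : 2 ≤ a := by
          rcases eq_or_lt_of_le h1 with h | h
          · exfalso
            apply hc
            rw [← h] at h3
            rw [← h3]
            exact hw.2.2.2
          · omega
        rw [h3, hlen_m, hlen3]
        have h4 : 2 * p ≤ a * p := Nat.mul_le_mul_right p ha2
        omega
      · intro y hys hyne hypal hyshort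
        have hylt : y.length < (listPow x 2 ++ u).length := hyshort _ hw2mem
        have hysuf : y <:+ listPow x 2 ++ u :=
          suffix_of_suffix_le hys (hsufs 2 hM2) (le_of_lt hylt)
        have h5 := pal_suffix_short (hpal_m 2) hypal hysuf hylt
        rw [hmin_m 2 le_rfl, hlen_m] at h5
        rw [hlen3]
        omega
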